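/- Let T be a surmonad on a surcategory (𝓔, A) over 𝔾. If (𝓔, A) is surcomplete, then the surcategory (𝓔^T, A) of suralgebras is surcomplete. -/

import Mathlib

open CategoryTheory CategoryTheory.Limits CategoryTheory.MonoidalCategory

universe w w' v u v₁ u₁ v₂ u₂ v₃ u₃ v₄ u₄

namespace Sur

variable {G : Type u} [Category.{v} G]

section Basic

variable {E : Type u₁} [Category.{v₁} E]

/-- A diagram whose composite with the arity functor is constant at `B`. -/
structure ArityConst (A : E ⥤ G) {J : Type w} [Category.{w'} J] (F : J ⥤ E) (B : G) : Prop where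
  obj_eq : ∀ j, A.obj (F.obj j) = B
  map_eq : ∀ {j j'} (f : j ⟶ j'),
    A.map (F.map f) = eqToHom ((obj_eq j).trans (obj_eq j').symm)

/-- A surcone on a diagram whose arity is constant at `B`: a cone together with an arity
morphism under which all legs lie. -/
structure Surcone (A : E ⥤ G) {J : Type w} [Category.{w'} J] (F : J ⥤ E) (B : G)
    (h : ∀ j, A.obj (F.obj j) = B) where
  pt : E
  leg : ∀ j, pt ⟶ F.obj j
  w : ∀ {j j'} (f : j ⟶ j'), leg j ≫ F.map f = leg j'
  arity : A.obj pt ⟶ B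
  fac : ∀ j, A.map (leg j) ≫ eqToHom (h j) = arity

/-- A surcone is a surlimit if its apex is in the fiber over `B`, its arity is the identity,
and every surcone factors through it by a unique morphism. -/
structure IsSurlimit (A : E ⥤ G) {J : Type w} [Category.{w'} J] {F : J ⥤ E} {B : G}
    {h : ∀ j, A.obj (F.obj j) = B} (c : Surcone A F B h) : Prop where
  pt_eq : A.obj c.pt = B
  arity_eq : c.arity = eqToHom pt_eq
  lift : ∀ c' : Surcone A F B h, ∃! f : c'.pt ⟶ c.pt,
    (∀ j, f ≫ c.leg j = c'.leg j) ∧ A.map f ≫ eqToHom pt_eq = c'.arity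

/-- `(E, A)` has `J`-surlimits. -/
def HasSurlimitsOfShape (A : E ⥤ G) (J : Type w) [Category.{w'} J] : Prop :=
  ∀ (F : J ⥤ E) (B : G) (hc : ArityConst A F B),
    ∃ c : Surcone A F B hc.obj_eq, IsSurlimit A c

/-- Dual notion : surcocone. -/
structure Surcocone (A : E ⥤ G) {J : Type w} [Category.{w'} J] (F : J ⥤ E) (B : G)
    (h : ∀ j, A.obj (F.obj j) = B) where
  pt : E
  leg : ∀ j, F.obj j ⟶ pt
  w : ∀ {j j'} (f : j ⟶ j'), F.map f ≫ leg j' = leg j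
  arity : B ⟶ A.obj pt
  fac : ∀ j, eqToHom (h j).symm ≫ A.map (leg j) = arity

structure IsSurcolimit (A : E ⥤ G) {J : Type w} [Category.{w'} J] {F : J ⥤ E} {B : G}
    {h : ∀ j, A.obj (F.obj j) = B} (c : Surcocone A F B h) : Prop where
  pt_eq : A.obj c.pt = B
  arity_eq : c.arity = eqToHom pt_eq.symm
  desc : ∀ c' : Surcocone A F B h, ∃! f : c.pt ⟶ c'.pt,
    (∀ j, c.leg j ≫ f = c'.leg j) ∧ eqToHom pt_eq.symm ≫ A.map f = c'.arity

def HasSurcolimitsOfShape (A : E ⥤ G) (J : Type w) [Category.{w'} J] : Prop :=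
  ∀ (F : J ⥤ E) (B : G) (hc : ArityConst A F B),
    ∃ c : Surcocone A F B hc.obj_eq, IsSurcolimit A c

/-- `(E, A)` has K-equalizers : every parallel pair with equal arity image has an equalizer
lying over an identity of the base. -/
def HasKEqualizers (A : E ⥤ G) : Prop :=
  ∀ ⦃a b : E⦄ (f g : a ⟶ b), A.map f = A.map g →
    ∃ (c : E) (e : c ⟶ a) (hc : A.obj c = A.obj a),
      A.map e = eqToHom hc ∧ e ≫ f = e ≫ g ∧
      ∀ ⦃d : E⦄ (k : d ⟶ a), k ≫ f = k ≫ g → ∃! l : d ⟶ c, l ≫ e = k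

/-- `e` is a surcoequalizer of the pair `(f, g)`. -/
def IsSurcoequalizer (A : E ⥤ G) {a b c : E} (f g : a ⟶ b) (e : b ⟶ c) : Prop :=
  ∃ h : A.obj b = A.obj c, A.map e = eqToHom h ∧ f ≫ e = g ≫ e ∧
    ∀ ⦃d : E⦄ (k : b ⟶ d), f ≫ k = g ≫ k → ∃! l : c ⟶ d, e ≫ l = k

/-- `(E, A)` has surcoequalizers of all parallel pairs lying in one fiber. -/
def HasSurcoequalizers (A : E ⥤ G) : Prop :=
  ∀ ⦃a b : E⦄ (f g : a ⟶ b) (hab : A.obj a = A.obj b),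
    A.map f = eqToHom hab → A.map g = eqToHom hab →
    ∃ (c : E) (e : b ⟶ c), IsSurcoequalizer A f g e

/-- `(E, A)` has surequalizers of all parallel pairs lying in one fiber. -/
def HasSurequalizers (A : E ⥤ G) : Prop :=
  ∀ ⦃a b : E⦄ (f g : a ⟶ b) (hab : A.obj a = A.obj b),
    A.map f = eqToHom hab → A.map g = eqToHom hab →
    ∃ (c : E) (e : c ⟶ a) (hc : A.obj c = A.obj a),
      A.map e = eqToHom hc ∧ e ≫ f = e ≫ g ∧
      ∀ ⦃d : E⦄ (k : d ⟶ a), k ≫ f = k ≫ g → ∃! l : d ⟶ c, l ≫ e = k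

/-- A split surfork : a split fork lying entirely in one fiber. -/
def IsSplitSurfork (A : E ⥤ G) {a b c : E} (f g : a ⟶ b) (h : b ⟶ c) : Prop :=
  (∃ hab : A.obj a = A.obj b, A.map f = eqToHom hab ∧ A.map g = eqToHom hab) ∧
  (∃ hbc : A.obj b = A.obj c, A.map h = eqToHom hbc) ∧
  f ≫ h = g ≫ h ∧
  ∃ (s : c ⟶ b) (t : b ⟶ a),
    (∃ hcb : A.obj c = A.obj b, A.map s = eqToHom hcb) ∧
    (∃ hba : A.obj b = A.obj a, A.map t = eqToHom hba) ∧
    s ≫ h = 𝟙 c ∧ t ≫ f = 𝟙 b ∧ t ≫ g = h ≫ s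

/-- A surinitial object in the fiber over `Gobj`. -/
def Surinitial (A : E ⥤ G) (Gobj : G) (x : E) : Prop :=
  ∃ hx : A.obj x = Gobj, ∀ (d : E) (h : Gobj ⟶ A.obj d),
    ∃! f : x ⟶ d, A.map f = eqToHom hx ≫ h

/-- A surmonad : a monad whose underlying functor, unit and multiplication lie over
identities of the base. -/
structure IsSurmonad (A : E ⥤ G) (T : Monad E) : Prop where
  sur : T.toFunctor ⋙ A = A
  unit_arity : ∀ X : E, A.map (T.η.app X) = eqToHom (Functor.congr_obj sur X).symm
  mul_arity : ∀ X : E, A.map (T.μ.app X) = eqToHom (Functor.congr_obj sur (T.obj X))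

end Basic

section Two

variable {E : Type u₁} [Category.{v₁} E] {E' : Type u₂} [Category.{v₂} E']

/-- An absolute surcoequalizer : a surcoequalizer preserved by every surfunctor. -/
def IsAbsoluteSurcoequalizer.{ua, va, ug, vg, ue, ve} {Gb : Type ug} [Category.{vg} Gb]
    {Eb : Type ue} [Category.{ve} Eb] (A : Eb ⥤ Gb) {a b c : Eb}
    (f g : a ⟶ b) (e : b ⟶ c) : Prop :=
  IsSurcoequalizer A f g e ∧
  ∀ (D : Type ua) [Category.{va} D] (A' : D ⥤ Gb) (Fc : Eb ⥤ D),
    Fc ⋙ A' = A → IsSurcoequalizer A' (Fc.map f) (Fc.map g) (Fc.map e)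

/-- The image of a surcone under a surfunctor. -/
def Surcone.map {A : E ⥤ G} {A' : E' ⥤ G} (Fc : E ⥤ E') (hsur : Fc ⋙ A' = A)
    {J : Type w} [Category.{w'} J] {D : J ⥤ E} {B : G} {h : ∀ j, A.obj (D.obj j) = B}
    (c : Surcone A D B h) :
    Surcone A' (D ⋙ Fc) B (fun j => (Functor.congr_obj hsur (D.obj j)).trans (h j)) where
  pt := Fc.obj c.pt
  leg j := Fc.map (c.leg j)
  w {j j'} f := by
    dsimp only [Functor.comp_map]
    rw [← Fc.map_comp, c.w f]
  arity := eqToHom (Functor.congr_obj hsur c.pt) ≫ c.arity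
  fac j := by
    have h1 := Functor.congr_hom hsur (c.leg j)
    dsimp only [Functor.comp_map] at h1
    rw [h1, Category.assoc, Category.assoc, eqToHom_trans, c.fac j]

/-- The image of a surcocone under a surfunctor. -/
def Surcocone.map {A : E ⥤ G} {A' : E' ⥤ G} (Fc : E ⥤ E') (hsur : Fc ⋙ A' = A)
    {J : Type w} [Category.{w'} J] {D : J ⥤ E} {B : G} {h : ∀ j, A.obj (D.obj j) = B}
    (c : Surcocone A D B h) :
    Surcocone A' (D ⋙ Fc) B (fun j => (Functor.congr_obj hsur (D.obj j)).trans (h j)) where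
  pt := Fc.obj c.pt
  leg j := Fc.map (c.leg j)
  w {j j'} f := by
    dsimp only [Functor.comp_map]
    rw [← Fc.map_comp, c.w f]
  arity := c.arity ≫ eqToHom (Functor.congr_obj hsur c.pt).symm
  fac j := by
    have h1 := Functor.congr_hom hsur (c.leg j)
    dsimp only [Functor.comp_map] at h1
    rw [h1, eqToHom_trans_assoc, ← Category.assoc, c.fac j]

/-- A surfunctor preserves `J`-surlimits. -/
def PreservesSurlimitsOfShape {A : E ⥤ G} {A' : E' ⥤ G} (Fc : E ⥤ E') (hsur : Fc ⋙ A' = A)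
    (J : Type w) [Category.{w'} J] : Prop :=
  ∀ (D : J ⥤ E) (B : G) (hc : ArityConst A D B) (c : Surcone A D B hc.obj_eq),
    IsSurlimit A c → IsSurlimit A' (c.map Fc hsur)

/-- A surfunctor preserves `J`-surcolimits. -/
def PreservesSurcolimitsOfShape {A : E ⥤ G} {A' : E' ⥤ G} (Fc : E ⥤ E') (hsur : Fc ⋙ A' = A)
    (J : Type w) [Category.{w'} J] : Prop :=
  ∀ (D : J ⥤ E) (B : G) (hc : ArityConst A D B) (c : Surcocone A D B hc.obj_eq),
    IsSurcolimit A c → IsSurcolimit A' (c.map Fc hsur)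

/-- A surfunctor preserves K-equalizers. -/
def PreservesKEqualizers {A : E ⥤ G} {A' : E' ⥤ G} (Fc : E ⥤ E')
    (_hsur : Fc ⋙ A' = A) : Prop :=
  ∀ ⦃a b c : E⦄ (f g : a ⟶ b) (e : c ⟶ a) (hc : A.obj c = A.obj a),
    A.map f = A.map g → A.map e = eqToHom hc → e ≫ f = e ≫ g →
    (∀ ⦃d : E⦄ (k : d ⟶ a), k ≫ f = k ≫ g → ∃! l : d ⟶ c, l ≫ e = k) →
    (Fc.map e ≫ Fc.map f = Fc.map e ≫ Fc.map g ∧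
     ∀ ⦃d : E'⦄ (k : d ⟶ Fc.obj a), k ≫ Fc.map f = k ≫ Fc.map g →
       ∃! l : d ⟶ Fc.obj c, l ≫ Fc.map e = k)

/-- A suradjunction : an adjunction between surfunctors whose unit and counit lie over
identities of the base. -/
structure IsSuradjunction (A' : E' ⥤ G) (A : E ⥤ G) (Fl : E' ⥤ E) (Fr : E ⥤ E')
    (adj : Fl ⊣ Fr) : Prop where
  left_sur : Fl ⋙ A = A'
  right_sur : Fr ⋙ A' = A
  unit_arity : ∀ X : E', A'.map (adj.unit.app X) =
    eqToHom (((Functor.congr_obj right_sur (Fl.obj X)).trans (Functor.congr_obj left_sur X)).symm)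
  counit_arity : ∀ Y : E, A.map (adj.counit.app Y) =
    eqToHom ((Functor.congr_obj left_sur (Fr.obj Y)).trans (Functor.congr_obj right_sur Y))

/-- `U` creates surcoequalizers of the parallel pair `(f, g)`. -/
def CreatesSurcoequalizersOf (A : E ⥤ G) (A' : E' ⥤ G) (U : E ⥤ E')
    {a b : E} (f g : a ⟶ b) : Prop :=
  ∀ (c : E') (e : U.obj b ⟶ c), IsSurcoequalizer A' (U.map f) (U.map g) e →
    ∃ (z : E) (q : b ⟶ z) (hz : U.obj z = c),
      U.map q = e ≫ eqToHom hz.symm ∧ IsSurcoequalizer A f g q ∧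
      ∀ (z' : E) (q' : b ⟶ z') (hz' : U.obj z' = c),
        U.map q' = e ≫ eqToHom hz'.symm →
        ∃ hzz : z = z', q' = q ≫ eqToHom hzz

/-- The solution set condition for an object `B` relative to a surfunctor `Fc`. -/
def SolutionSet (A' : E' ⥤ G) (Fc : E ⥤ E') (B : E') : Prop :=
  ∃ (I : Type w) (obj : I → E) (bi : ∀ i, B ⟶ Fc.obj (obj i))
    (hι : ∀ i, A'.obj B = A'.obj (Fc.obj (obj i))),
    (∀ i, A'.map (bi i) = eqToHom (hι i)) ∧
    ∀ (a : E) (b : B ⟶ Fc.obj a), ∃ (i : I) (x : obj i ⟶ a), bi i ≫ Fc.map x = b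

/-- A fusionnable suradjunction (condition on the right adjoint surfunctor `U`). -/
def Fusionnable {Ac : E ⥤ G} {Ab : E' ⥤ G} (U : E ⥤ E') (hU : U ⋙ Ab = Ac) : Prop :=
  HasSurcoequalizers Ac ∧ HasSurcolimitsOfShape Ac ℕ ∧ HasSurcolimitsOfShape Ab ℕ ∧
  U.Faithful ∧ PreservesSurcolimitsOfShape U hU ℕ

/-- A `κ`-filtered category : every diagram of size `< κ` admits a cocone. -/
def IsCardinalFilteredCat (J : Type w) [Category.{w} J] (κ : Cardinal.{w}) : Prop :=
  ∀ (K : Type w) [SmallCategory K], Cardinal.mk K < κ →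
    Cardinal.mk ((k : K) × (k' : K) × (k ⟶ k')) < κ →
    ∀ D : K ⥤ J, ∃ (j : J) (cc : ∀ k, D.obj k ⟶ j),
      ∀ {k k'} (f : k ⟶ k'), D.map f ≫ cc k' = cc k

end Two

section Pullback

variable {E : Type u₁} [Category.{v₁} E] {E' : Type u₂} [Category.{v₂} E']
  {Bc : Type u₃} [Category.{v₃} Bc]

/-- The strict pullback of two functors `U : E ⥤ Bc` and `V : E' ⥤ Bc`. -/
structure CatPullback (U : E ⥤ Bc) (V : E' ⥤ Bc) where
  left : E
  right : E'
  eq : U.obj left = V.obj right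

@[ext]
structure CatPullbackHom (U : E ⥤ Bc) (V : E' ⥤ Bc) (X Y : CatPullback U V) where
  left : X.left ⟶ Y.left
  right : X.right ⟶ Y.right
  w : U.map left = eqToHom X.eq ≫ V.map right ≫ eqToHom Y.eq.symm

instance (U : E ⥤ Bc) (V : E' ⥤ Bc) : Category (CatPullback U V) where
  Hom X Y := CatPullbackHom U V X Y
  id X := ⟨𝟙 _, 𝟙 _, by simp⟩
  comp f g := ⟨f.left ≫ g.left, f.right ≫ g.right, by simp [f.w, g.w]⟩
  id_comp f := by apply CatPullbackHom.ext <;> simp [CategoryStruct.comp, CategoryStruct.id]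
  comp_id f := by apply CatPullbackHom.ext <;> simp [CategoryStruct.comp, CategoryStruct.id]
  assoc f g h := by apply CatPullbackHom.ext <;> simp [CategoryStruct.comp]

/-- The canonical functor from the strict pullback of `U` and `V` to their common codomain. -/
def Ofun (U : E ⥤ Bc) (V : E' ⥤ Bc) : CatPullback U V ⥤ Bc where
  obj X := U.obj X.left
  map f := U.map f.left
  map_id X := by
    show U.map (𝟙 X.left) = _
    simp
  map_comp f g := by
    show U.map (_ ≫ _) = _
    simp

/-- The arity functor on the comma category `B ↓ Fc` of a surfunctor `Fc`. -/
def commaArity {A : E ⥤ G} {A' : E' ⥤ G} (Fc : E ⥤ E') (hsur : Fc ⋙ A' = A) (B : E') :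
    StructuredArrow B Fc ⥤ Under (A'.obj B) where
  obj p := Under.mk (A'.map p.hom ≫ eqToHom (Functor.congr_obj hsur p.right))
  map {p q} f := Under.homMk (A.map f.right) (by
    have hw : p.hom ≫ Fc.map f.right = q.hom := StructuredArrow.w f
    have h1 := Functor.congr_hom hsur f.right
    dsimp only [Functor.comp_map] at h1
    dsimp [Under.mk]
    have h2 : eqToHom (Functor.congr_obj hsur p.right) ≫ A.map f.right
        = A'.map (Fc.map f.right) ≫ eqToHom (Functor.congr_obj hsur q.right) := by
      rw [h1]; simp
    rw [Category.assoc, h2, ← Category.assoc, ← A'.map_comp, hw])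

end Pullback

universe s

/-- If the base surcategory of a surmonad is surcomplete then so is its surcategory of
suralgebras. -/
theorem suralgebras_surcomplete
    {G : Type u} [Category.{v} G] {E : Type u₁} [Category.{v₁} E]
    (A : E ⥤ G) (T : Monad E) (hT : IsSurmonad A T)
    (hc : ∀ (J : Type s) [SmallCategory J], HasSurlimitsOfShape A J) :
    ∀ (J : Type s) [SmallCategory J], HasSurlimitsOfShape (T.forget ⋙ A) J := by
  intro J _ F B hcF
  -- arity of algebra structure maps
  have halg : ∀ X : T.Algebra, A.map X.a = eqToHom (Functor.congr_obj hT.sur X.A) := by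
    intro X
    have h1 : A.map (T.η.app X.A ≫ X.a) = A.map (𝟙 X.A) := by rw [X.unit]
    rw [A.map_comp, hT.unit_arity, A.map_id] at h1
    calc A.map X.a
        = eqToHom (Functor.congr_obj hT.sur X.A) ≫
            (eqToHom (Functor.congr_obj hT.sur X.A).symm ≫ A.map X.a) := by simp
      _ = eqToHom (Functor.congr_obj hT.sur X.A) := by rw [h1, Category.comp_id]
  -- the underlying diagram in E
  set D : J ⥤ E := F ⋙ T.forget with hD
  have hcD : ArityConst A D B :=
    ⟨fun j => hcF.obj_eq j, @fun j j' f => hcF.map_eq f⟩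
  obtain ⟨c, hlim⟩ := hc J D B hcD
  have hAc : ∀ j, A.map (c.leg j) = eqToHom (hlim.pt_eq.trans (hcD.obj_eq j).symm) := by
    intro j
    have := c.fac j
    rw [hlim.arity_eq] at this
    calc A.map (c.leg j)
        = (A.map (c.leg j) ≫ eqToHom (hcD.obj_eq j)) ≫ eqToHom (hcD.obj_eq j).symm := by simp
      _ = _ := by rw [this]; simp
  -- the candidate structure map, via the universal property
  have hTpt : A.obj (T.obj c.pt) = B := (Functor.congr_obj hT.sur c.pt).trans hlim.pt_eq
  let c' : Surcone A D B hcD.obj_eq :=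
    { pt := T.obj c.pt
      leg := fun j => T.map (c.leg j) ≫ (F.obj j).a
      w := by
        intro j j' f
        have hh := (F.map f).h
        show (T.map (c.leg j) ≫ (F.obj j).a) ≫ (F.map f).f = T.map (c.leg j') ≫ (F.obj j').a
        erw [Category.assoc, ← hh, ← Category.assoc, ← T.toFunctor.map_comp]
        have hcw : c.leg j ≫ (F.map f).f = c.leg j' := c.w f
        rw [hcw]
        rfl
      arity := eqToHom hTpt
      fac := by
        intro j
        have hch := Functor.congr_hom hT.sur (c.leg j)
        simp only [Functor.comp_map] at hch
        erw [A.map_comp, halg, hch, hAc j]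
        erw [eqToHom_trans, eqToHom_trans, eqToHom_trans, eqToHom_trans] }
  obtain ⟨a, ⟨ha_leg, ha_ar⟩, ha_uniq⟩ := hlim.lift c'
  have hAa : A.map a = eqToHom ((Functor.congr_obj hT.sur c.pt)) := by
    have := ha_ar
    calc A.map a
        = (A.map a ≫ eqToHom hlim.pt_eq) ≫ eqToHom hlim.pt_eq.symm := by simp
      _ = _ := by rw [this]; simp [c', hTpt]
  -- unit law
  have hunit : T.η.app c.pt ≫ a = 𝟙 c.pt := by
    have h1 : ∀ j, (T.η.app c.pt ≫ a) ≫ c.leg j = c.leg j := by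
      intro j
      rw [Category.assoc, ha_leg j]
      show T.η.app c.pt ≫ T.toFunctor.map (c.leg j) ≫ (F.obj j).a = c.leg j
      have hn := T.η.naturality (c.leg j)
      simp only [Functor.id_map] at hn
      erw [← Category.assoc, ← hn, Category.assoc]
      show c.leg j ≫ T.η.app (F.obj j).A ≫ (F.obj j).a = c.leg j
      erw [(F.obj j).unit]
      exact Category.comp_id (c.leg j)
    have h2 := hlim.lift c
    refine (h2.unique ⟨h1, ?_⟩ ⟨fun j => Category.id_comp _, ?_⟩)
    · rw [A.map_comp, hT.unit_arity, hAa, hlim.arity_eq]; simp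
    · rw [A.map_id, hlim.arity_eq]; simp
  -- associativity law
  have hassoc : T.μ.app c.pt ≫ a = T.map a ≫ a := by
    have hTT : A.obj (T.obj (T.obj c.pt)) = B :=
      (Functor.congr_obj hT.sur (T.obj c.pt)).trans hTpt
    let c'' : Surcone A D B hcD.obj_eq :=
      { pt := T.obj (T.obj c.pt)
        leg := fun j => T.μ.app c.pt ≫ a ≫ c.leg j
        w := by intro j j' f; rw [Category.assoc, Category.assoc, c.w f]
        arity := eqToHom hTT
        fac := by
          intro j
          rw [A.map_comp, A.map_comp, hT.mul_arity, hAa, hAc j]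
          simp }
    have huniq := hlim.lift c''
    refine huniq.unique ⟨?_, ?_⟩ ⟨?_, ?_⟩
    · intro j; simp [c'']
    · rw [A.map_comp, hT.mul_arity, hAa]; simp [c'', hTT]
    · intro j
      have h1 : a ≫ c.leg j = T.toFunctor.map (c.leg j) ≫ (F.obj j).a := ha_leg j
      have h2 : T.toFunctor.map a ≫ a ≫ c.leg j
          = T.toFunctor.map (T.toFunctor.map (c.leg j)) ≫
              T.toFunctor.map ((F.obj j).a) ≫ (F.obj j).a := by
        erw [h1, ← Category.assoc, ← T.toFunctor.map_comp, h1, T.toFunctor.map_comp,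
          Category.assoc]
        rfl
      have hnat := T.μ.naturality (c.leg j)
      simp only [Functor.comp_map] at hnat
      have h3 : T.μ.app c.pt ≫ a ≫ c.leg j
          = T.toFunctor.map (T.toFunctor.map (c.leg j)) ≫ T.μ.app (D.obj j) ≫ (F.obj j).a := by
        erw [h1, ← Category.assoc, ← hnat, Category.assoc]
        rfl
      have h4 : T.μ.app (D.obj j) ≫ (F.obj j).a
          = T.toFunctor.map ((F.obj j).a) ≫ (F.obj j).a := (F.obj j).assoc
      show (T.toFunctor.map a ≫ a) ≫ c.leg j = T.μ.app c.pt ≫ a ≫ c.leg j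
      rw [Category.assoc, h2, h3, h4]
      rfl
    · have hca := Functor.congr_hom hT.sur a
      simp only [Functor.comp_map] at hca
      rw [A.map_comp, hca, hAa]
      simp [c'']
  -- the limit algebra
  let X : T.Algebra := ⟨c.pt, a, hunit, hassoc⟩
  have hXleg : ∀ j, (T.toFunctor.map (c.leg j)) ≫ (F.obj j).a = a ≫ c.leg j := by
    intro j; rw [ha_leg j]; rfl
  refine ⟨{ pt := X
            leg := fun j => ⟨c.leg j, hXleg j⟩
            w := by
              intro j j' f
              apply Monad.Algebra.Hom.ext
              exact c.w f
            arity := c.arity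
            fac := fun j => c.fac j }, ?_⟩
  refine ⟨hlim.pt_eq, hlim.arity_eq, ?_⟩
  intro c₂
  -- the underlying surcone in E
  let c₂E : Surcone A D B hcD.obj_eq :=
    { pt := c₂.pt.A
      leg := fun j => (c₂.leg j).f
      w := by
        intro j j' f
        have := c₂.w f
        exact congrArg Monad.Algebra.Hom.f this
      arity := c₂.arity
      fac := fun j => c₂.fac j }
  obtain ⟨f₀, ⟨hf₀_leg, hf₀_ar⟩, hf₀_uniq⟩ := hlim.lift c₂E
  -- f₀ is an algebra morphism
  have hAf₀ : A.map f₀ = c₂.arity ≫ eqToHom hlim.pt_eq.symm := by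
    calc A.map f₀ = (A.map f₀ ≫ eqToHom hlim.pt_eq) ≫ eqToHom hlim.pt_eq.symm := by simp
      _ = _ := by rw [hf₀_ar]; rfl
  have hAa₂ : A.map c₂.pt.a = eqToHom (Functor.congr_obj hT.sur c₂.pt.A) := halg c₂.pt
  have hf₀alg : T.toFunctor.map f₀ ≫ a = c₂.pt.a ≫ f₀ := by
    have hTpt₂ : A.obj (T.obj c₂.pt.A) = A.obj c₂.pt.A := Functor.congr_obj hT.sur c₂.pt.A
    let c₃ : Surcone A D B hcD.obj_eq :=
      { pt := T.obj c₂.pt.A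
        leg := fun j => c₂.pt.a ≫ (c₂.leg j).f
        w := by
          intro j j' f
          erw [Category.assoc]
          congr 1
          exact congrArg Monad.Algebra.Hom.f (c₂.w f)
        arity := eqToHom hTpt₂ ≫ c₂.arity
        fac := by
          intro j
          erw [A.map_comp, hAa₂, Category.assoc, c₂E.fac j] }
    have huniq := hlim.lift c₃
    refine huniq.unique ⟨?_, ?_⟩ ⟨?_, ?_⟩
    · intro j
      rw [Category.assoc, ha_leg j]
      show T.map f₀ ≫ T.map (c.leg j) ≫ (F.obj j).a = _
      erw [← Category.assoc, ← T.toFunctor.map_comp, hf₀_leg j]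
      exact (c₂.leg j).h
    · have hcf := Functor.congr_hom hT.sur f₀
      simp only [Functor.comp_map] at hcf
      rw [A.map_comp, hcf, hAa, hAf₀]; simp [c₃]
      exact (show ∀ {X X' Y Z W : G} (x : X ⟶ Y) (p : X' = X) (q : Y = Z) (r : Z = W) (s : W = Y),
          eqToHom p ≫ ((x ≫ eqToHom q) ≫ eqToHom r) ≫ eqToHom s = eqToHom p ≫ x by
        intros; subst_vars; simp) _ _ _ _ _
    · intro j; rw [Category.assoc, hf₀_leg j]
    · rw [A.map_comp, hAa₂, hAf₀]; simp [c₃]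
      exact (show ∀ {X X' Y Z : G} (x : X ⟶ Y) (p : X' = X) (q : Y = Z) (r : Z = Y),
          (eqToHom p ≫ x ≫ eqToHom q) ≫ eqToHom r = eqToHom p ≫ x by
        intros; subst_vars; simp) _ _ _ _
  refine ⟨⟨f₀, hf₀alg⟩, ⟨?_, ?_⟩, ?_⟩
  · intro j
    apply Monad.Algebra.Hom.ext
    exact hf₀_leg j
  · exact hf₀_ar
  · rintro g ⟨hg_leg, hg_ar⟩
    apply Monad.Algebra.Hom.ext
    exact hf₀_uniq g.f ⟨fun j => congrArg Monad.Algebra.Hom.f (hg_leg j), hg_ar⟩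

end Sur
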